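/- Let μ > 0, a > 0, S = [0,a]^n ⊆ ℝ^n, b ∈ S, and u ∈ ℝ^n. Then the function x ↦ ‖x − b‖₁ + δ_S(x) + (μ/2)‖u − x‖² has a unique minimizer x̂ over ℝ^n, given componentwise by x̂_i = min(a, max(0, z_i)), where z_i = u_i − 1/μ if u_i > b_i + 1/μ, z_i = b_i if b_i − 1/μ ≤ u_i ≤ b_i + 1/μ, and z_i = u_i + 1/μ if u_i < b_i − 1/μ. -/

import Mathlib

open scoped RealInnerProductSpace
noncomputable section

/-- `Euc k` is the Euclidean space `ℝ^k`. -/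
abbrev Euc (k : ℕ) := EuclideanSpace ℝ (Fin k)

/-- `f` is proper: nowhere `-∞` and somewhere finite. -/
def IsProperFn {k : ℕ} (f : Euc k → EReal) : Prop :=
  (∀ x, f x ≠ ⊥) ∧ ∃ x, f x ≠ ⊤

/-- Convexity of an extended-real-valued function. -/
def IsConvexFn {k : ℕ} (f : Euc k → EReal) : Prop :=
  ∀ x y : Euc k, ∀ t : ℝ, 0 < t → t < 1 →
    f (t • x + (1 - t) • y) ≤ (t : EReal) * f x + ((1 - t : ℝ) : EReal) * f y

/-- `f` is proper, convex, lower semicontinuous with bounded effective domain. -/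
def NiceFn {k : ℕ} (f : Euc k → EReal) : Prop :=
  IsProperFn f ∧ IsConvexFn f ∧ LowerSemicontinuous f ∧
    Bornology.IsBounded {x | f x ≠ ⊤}

/-- The Fenchel conjugate `f*(q) = sup_x {⟨q,x⟩ - f(x)}` (real-valued). -/
noncomputable def conjFn {k : ℕ} (f : Euc k → EReal) (q : Euc k) : ℝ :=
  (⨆ x, ((⟪q, x⟫ : ℝ) : EReal) - f x).toReal

/-- The Fenchel conjugate as an extended real. -/
noncomputable def conjE {k : ℕ} (f : Euc k → EReal) (q : Euc k) : EReal :=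
  ⨆ x, ((⟪q, x⟫ : ℝ) : EReal) - f x

/-- The smoothed conjugate `f_r*(q) = sup_x {⟨q,x⟩ - f(x) - (r/2)‖x‖²}`. -/
noncomputable def conjSm {k : ℕ} (f : Euc k → EReal) (r : ℝ) (q : Euc k) : ℝ :=
  (⨆ x, ((⟪q, x⟫ - r / 2 * ‖x‖ ^ 2 : ℝ) : EReal) - f x).toReal

/-- The proximal objective `x ↦ f(x) + (r/2)‖u - x‖²`. -/
noncomputable def proxObj {k : ℕ} (f : Euc k → EReal) (r : ℝ) (u x : Euc k) : EReal :=
  f x + ((r / 2 * ‖u - x‖ ^ 2 : ℝ) : EReal)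

/-- `D_f = sup {‖x‖²/2 : x ∈ dom f}`. -/
noncomputable def Dsup {k : ℕ} (f : Euc k → EReal) : ℝ :=
  sSup ((fun x : Euc k => ‖x‖ ^ 2 / 2) '' {x | f x ≠ ⊤})

/-- `x0` is the unique global minimizer of `h`. -/
def UniqMin {α : Type*} {β : Type*} [Preorder β] (h : α → β) (x0 : α) : Prop :=
  (∀ x, h x0 ≤ h x) ∧ ∀ x, (∀ y, h x ≤ h y) → x = x0

/-- The dual objective `θ(p) = f*(A*p) + g*(-p)`. -/
noncomputable def theta {n m : ℕ} (f : Euc n → EReal) (g : Euc m → EReal)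
    (A : Euc n →L[ℝ] Euc m) (p : Euc m) : ℝ :=
  conjFn f (ContinuousLinearMap.adjoint A p) + conjFn g (-p)

/-- The singly smoothed dual objective `θ_{ρ,μ}(p) = f_ρ*(A*p) + g_μ*(-p)`. -/
noncomputable def thetaSm {n m : ℕ} (f : Euc n → EReal) (g : Euc m → EReal)
    (A : Euc n →L[ℝ] Euc m) (r s : ℝ) (p : Euc m) : ℝ :=
  conjSm f r (ContinuousLinearMap.adjoint A p) + conjSm g s (-p)

/-- The doubly smoothed dual objective `θ_{ρ,μ,κ}(p) = θ_{ρ,μ}(p) + (κ/2)‖p‖²`. -/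
noncomputable def thetaSmK {n m : ℕ} (f : Euc n → EReal) (g : Euc m → EReal)
    (A : Euc n →L[ℝ] Euc m) (r s c : ℝ) (p : Euc m) : ℝ :=
  thetaSm f g A r s p + c / 2 * ‖p‖ ^ 2

/-- The optimal value of the primal problem `v(P) = inf {f(x) + g(Ax)}`. -/
noncomputable def vPrimal {n m : ℕ} (f : Euc n → EReal) (g : Euc m → EReal)
    (A : Euc n →L[ℝ] Euc m) : EReal := ⨅ x, f x + g (A x)

/-- The optimal value of the dual problem `v(D) = -inf θ`. -/
noncomputable def vDual {n m : ℕ} (f : Euc n → EReal) (g : Euc m → EReal)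
    (A : Euc n →L[ℝ] Euc m) : ℝ := -(⨅ p, theta f g A p)

/-- The indicator function `δ_S` of a set, with values in the extended reals. -/
noncomputable def indicatorE {k : ℕ} (S : Set (Euc k)) (x : Euc k) : EReal :=
  @ite _ (x ∈ S) (Classical.propDecidable _) 0 ⊤

/-- The objective `x ↦ ‖x - b‖₁ + δ_{[0,a]^n}(x) + (μ/2)‖u - x‖²`. -/
noncomputable def obj19 (n : ℕ) (μ a : ℝ) (b u : Euc n) (x : Euc n) : EReal :=
  (((∑ i, |x i - b i|) + μ / 2 * ‖u - x‖ ^ 2 : ℝ) : EReal)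
    + indicatorE {v : Euc n | ∀ i, v i ∈ Set.Icc (0 : ℝ) a} x

lemma key1d' (μ a b u t x s : ℝ) (hμ : 0 < μ) (ht0 : 0 ≤ t) (hta : t ≤ a)
    (hs : |s| ≤ 1) (hsx : s * (x - b) = |x - b|)
    (hpos : 0 < x → μ * (x - u) + s ≤ 0) (hlt : x < a → 0 ≤ μ * (x - u) + s)
    (hx0 : 0 ≤ x) (hxa : x ≤ a) :
    |x - b| + μ/2*(u-x)^2 + μ/2*(t-x)^2 ≤ |t-b| + μ/2*(u-t)^2 := by
  have h2 : s * (t - b) ≤ |t - b| := by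
    calc s * (t-b) ≤ |s * (t-b)| := le_abs_self _
      _ = |s| * |t-b| := abs_mul _ _
      _ ≤ 1 * |t-b| := mul_le_mul_of_nonneg_right hs (abs_nonneg _)
      _ = |t-b| := one_mul _
  have h3 : 0 ≤ (μ * (x - u) + s) * (t - x) := by
    rcases lt_trichotomy t x with h | h | h
    · nlinarith [hpos (lt_of_le_of_lt ht0 h)]
    · simp [h]
    · exact mul_nonneg (hlt (lt_of_lt_of_le h hta)) (by linarith)
  nlinarith [h2, h3, hsx]

lemma key1d (μ a b u t c z x : ℝ) (hμ : 0 < μ) (hb0 : 0 ≤ b) (hba : b ≤ a)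
    (ht0 : 0 ≤ t) (hta : t ≤ a) (hc : 0 < c) (hmc : μ * c = 1)
    (hz : z = if b + c < u then u - c else if u < b - c then u + c else b)
    (hx : x = min a (max 0 z)) :
    |x - b| + μ/2*(u-x)^2 + μ/2*(t-x)^2 ≤ |t-b| + μ/2*(u-t)^2 := by
  have hxa : x ≤ a := by rw [hx]; exact min_le_left _ _
  have hx0 : 0 ≤ x := by rw [hx]; exact le_min (by linarith) (le_max_left _ _)
  split_ifs at hz with h1 h2
  · refine key1d' μ a b u t x 1 hμ ht0 hta (by norm_num) ?_ ?_ ?_ hx0 hxa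
    · have hbx : b ≤ x := by
        rw [hx]; exact le_min hba (le_max_of_le_right (by linarith))
      rw [one_mul, abs_of_nonneg (by linarith)]
    · intro _
      rcases le_or_gt z a with h | h
      · have : x = z := by rw [hx, max_eq_right (by linarith), min_eq_right h]
        rw [this, hz]; nlinarith
      · have : x = a := by
          rw [hx, max_eq_right (by linarith), min_eq_left h.le]
        rw [this]; nlinarith
    · intro hxlt
      rcases le_or_gt z a with h | h
      · have : x = z := by rw [hx, max_eq_right (by linarith), min_eq_right h]
        rw [this, hz]; nlinarith
      · exfalso
        have : x = a := by rw [hx, max_eq_right (by linarith), min_eq_left h.le]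
        rw [this] at hxlt; exact lt_irrefl a hxlt
  · refine key1d' μ a b u t x (-1) hμ ht0 hta (by norm_num) ?_ ?_ ?_ hx0 hxa
    · have hxb : x ≤ b := by
        rw [hx]
        refine min_le_of_right_le (max_le hb0 (by linarith))
      rw [abs_of_nonpos (by linarith)]; ring
    · intro hx0'
      have : x = z := by
        rw [hx]
        have : (0:ℝ) < max 0 z := by
          rw [hx] at hx0'; exact lt_of_lt_of_le hx0' (min_le_right _ _)
        have hz0 : 0 < z := by rcases max_cases 0 z with ⟨he,_⟩|⟨he,_⟩ <;> rw [he] at this <;> [exact absurd this (lt_irrefl 0); exact this]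
        rw [max_eq_right hz0.le, min_eq_right (by linarith)]
      rw [this, hz]; nlinarith
    · intro _
      rcases le_or_gt 0 z with h | h
      · have : x = z := by rw [hx, max_eq_right h, min_eq_right (by linarith)]
        rw [this, hz]; nlinarith
      · have : x = 0 := by rw [hx, max_eq_left h.le, min_eq_right (hb0.trans hba)]
        rw [this]; nlinarith [hz ▸ h]
  · push_neg at h1 h2
    have hxb : x = b := by rw [hx, hz, max_eq_right hb0, min_eq_right hba]
    refine key1d' μ a b u t x (μ*(u-b)) hμ ht0 hta ?_ ?_ ?_ ?_ hx0 hxa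
    · rw [abs_le]; constructor <;> nlinarith
    · rw [hxb, sub_self, mul_zero, abs_zero]
    · intro _; rw [hxb]; ring_nf; nlinarith
    · intro _; rw [hxb]; ring_nf; nlinarith

/-- The function `x ↦ ‖x - b‖₁ + δ_{[0,a]^n}(x) + (μ/2)‖u - x‖²` has a unique minimizer over
`ℝ^n`, given componentwise by `x̂ᵢ = min(a, max(0, zᵢ))`, where `zᵢ = uᵢ - 1/μ` if
`uᵢ > bᵢ + 1/μ`, `zᵢ = bᵢ` if `bᵢ - 1/μ ≤ uᵢ ≤ bᵢ + 1/μ`, and `zᵢ = uᵢ + 1/μ` if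
`uᵢ < bᵢ - 1/μ`. -/
theorem stmt19 (n : ℕ) (μ a : ℝ) (hμ : 0 < μ) (ha : 0 < a) (b u : Euc n)
    (hb : ∀ i, b i ∈ Set.Icc (0 : ℝ) a) :
    ∃ xhat : Euc n,
      (∀ i, xhat i = min a (max 0
        (if b i + 1 / μ < u i then u i - 1 / μ
         else if u i < b i - 1 / μ then u i + 1 / μ else b i))) ∧
      (∀ y, obj19 n μ a b u xhat ≤ obj19 n μ a b u y) ∧
      (∀ y, (∀ z, obj19 n μ a b u y ≤ obj19 n μ a b u z) → y = xhat) := by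
  classical
  set S : Set (Euc n) := {v : Euc n | ∀ i, v i ∈ Set.Icc (0 : ℝ) a} with hS
  set xhat : Euc n := WithLp.toLp 2 (fun i => min a (max 0
        (if b i + 1 / μ < u i then u i - 1 / μ
         else if u i < b i - 1 / μ then u i + 1 / μ else b i)) : Fin n → ℝ) with hxhat
  have hc : 0 < 1/μ := by positivity
  have hmc : μ * (1/μ) = 1 := by field_simp
  have hnorm : ∀ x y : Euc n, ‖x - y‖^2 = ∑ i, (x i - y i)^2 := by
    intro x y
    rw [EuclideanSpace.norm_eq, Real.sq_sqrt (by positivity)]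
    simp [Real.norm_eq_abs, sq_abs]
  have hxS : xhat ∈ S := by
    intro i
    exact ⟨le_min ha.le (le_max_left _ _), min_le_left _ _⟩
  -- per-coordinate summed inequality
  have hkey : ∀ y : Euc n, y ∈ S →
      (∑ i, |xhat i - b i|) + μ/2 * ‖u - xhat‖^2 + μ/2 * ∑ i, (y i - xhat i)^2
        ≤ (∑ i, |y i - b i|) + μ/2 * ‖u - y‖^2 := by
    intro y hy
    have hsum : ∑ i, (|xhat i - b i| + μ/2*(u i - xhat i)^2 + μ/2*(y i - xhat i)^2)
        ≤ ∑ i, (|y i - b i| + μ/2*(u i - y i)^2) := Finset.sum_le_sum fun i _ =>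
      key1d μ a (b i) (u i) (y i) (1/μ) _ (xhat i) hμ (hb i).1 (hb i).2
      (hy i).1 (hy i).2 hc hmc rfl rfl
    rw [hnorm, hnorm]
    simpa [Finset.sum_add_distrib, Finset.mul_sum] using hsum
  have hobj : ∀ y : Euc n, y ∈ S →
      obj19 n μ a b u y = (((∑ i, |y i - b i|) + μ / 2 * ‖u - y‖ ^ 2 : ℝ) : EReal) := by
    intro y hy
    rw [obj19, indicatorE, if_pos hy, add_zero]
  have hobjT : ∀ y : Euc n, y ∉ S → obj19 n μ a b u y = ⊤ := by
    intro y hy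
    rw [obj19, indicatorE, if_neg hy]
    exact EReal.add_top_of_ne_bot (EReal.coe_ne_bot _)
  refine ⟨xhat, fun i => rfl, ?_, ?_⟩
  · intro y
    by_cases hy : y ∈ S
    · rw [hobj _ hxS, hobj _ hy, EReal.coe_le_coe_iff]
      have := hkey y hy
      have hnn : (0:ℝ) ≤ μ/2 * ∑ i, (y i - xhat i)^2 := by positivity
      linarith
    · rw [hobjT _ hy]; exact le_top
  · intro y hy
    have hyx : obj19 n μ a b u y ≤ obj19 n μ a b u xhat := hy xhat
    have hyS : y ∈ S := by
      by_contra hys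
      rw [hobjT _ hys, hobj _ hxS, top_le_iff] at hyx
      exact (EReal.coe_ne_top _) hyx
    rw [hobj _ hxS, hobj _ hyS, EReal.coe_le_coe_iff] at hyx
    have h1 := hkey y hyS
    have hsum : ∑ i, (y i - xhat i)^2 ≤ 0 := by nlinarith
    have hz : ∀ i ∈ Finset.univ, (y i - xhat i)^2 = 0 := by
      rw [← Finset.sum_eq_zero_iff_of_nonneg (fun i _ => sq_nonneg _)]
      exact le_antisymm hsum (Finset.sum_nonneg fun i _ => sq_nonneg _)
    ext i
    have := hz i (Finset.mem_univ i)
    have : y i - xhat i = 0 := by nlinarith [this]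
    linarith
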